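/- Let X be a monotone bead distribution of n+1 beads on [μ,∞), and define 𝒯(X) by successively replacing (from k = n down to k = 1) the k-th coordinate with the midpoint of its neighbors (with X₀ = μ). Then the first coordinate of Y = 𝒯(X) satisfies Y₁ = μ + Σ_{k=1}^{n−1} xₖ/2ᵏ + xₙ/2ⁿ + x_{n+1}/2ⁿ, where xₖ are the gaps of X. -/

import Mathlib

/-- `A` is a monotone bead distribution of `n` beads on `[μ,∞)`.
We use the convention `A 0 = μ`, so the beads are `A 1 < ⋯ < A n` with
`μ ≤ A 1` and nondecreasing successive gaps. -/
def BeadMono (n : ℕ) (μ : ℝ) (A : ℕ → ℝ) : Prop :=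
  A 0 = μ ∧ A 0 ≤ A 1 ∧
  (∀ k, 2 ≤ k → k ≤ n → A (k - 1) < A k) ∧
  (∀ k, 2 ≤ k → k ≤ n → A (k - 1) - A (k - 2) ≤ A k - A (k - 1))

/-- One admissible bead slide: move the `k`-th bead to the right by `δ ≥ 0`
so that the result is again monotone. -/
def BeadSlide (n : ℕ) (μ : ℝ) (A B : ℕ → ℝ) : Prop :=
  ∃ k δ, 1 ≤ k ∧ k ≤ n ∧ 0 ≤ δ ∧
    B = Function.update A k (A k + δ) ∧ BeadMono n μ B

/-- `BeadReach n μ A B`: `B` is obtained from `A` by finitely many admissible slides. -/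
def BeadReach (n : ℕ) (μ : ℝ) : (ℕ → ℝ) → (ℕ → ℝ) → Prop :=
  Relation.ReflTransGen (BeadSlide n μ)

/-- The midpoint slide: replace the `k`-th coordinate by the midpoint of its
neighbors (with the convention `X 0 = μ`). -/
noncomputable def Mid (k : ℕ) (X : ℕ → ℝ) : ℕ → ℝ :=
  Function.update X k ((X (k - 1) + X (k + 1)) / 2)

/-- `Tmap n = Mid 1 ∘ Mid 2 ∘ ⋯ ∘ Mid n`. -/
noncomputable def Tmap : ℕ → (ℕ → ℝ) → (ℕ → ℝ)
  | 0, X => X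
  | n + 1, X => Tmap n (Mid (n + 1) X)

/-- the first coordinate of `Y = 𝒯 X` is
`μ + Σ_{k=1}^{n-1} xₖ/2ᵏ + xₙ/2ⁿ + x_{n+1}/2ⁿ`, where `xₖ` are the gaps of `X`. -/
lemma tmap_one (m : ℕ) : ∀ X : ℕ → ℝ,
    (Tmap (m + 1) X) 1
      = (∑ j ∈ Finset.Icc 1 (m + 1), X (j - 1) / 2 ^ j) + X (m + 2) / 2 ^ (m + 1) := by
  induction m with
  | zero =>
    intro X
    show (Mid 1 X) 1 = _
    simp [Mid, Function.update_self]
    ring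
  | succ m ih =>
    intro X
    show (Tmap (m + 1) (Mid (m + 2) X)) 1 = _
    rw [ih (Mid (m + 2) X)]
    have h1 : ∀ j ∈ Finset.Icc 1 (m + 1),
        (Mid (m + 2) X) (j - 1) / 2 ^ j = X (j - 1) / 2 ^ j := by
      intro j hj
      simp only [Finset.mem_Icc] at hj
      have : j - 1 ≠ m + 2 := by omega
      simp [Mid, Function.update_of_ne this]
    rw [Finset.sum_congr rfl h1]
    have h2 : (Mid (m + 2) X) (m + 2) = (X (m + 1) + X (m + 3)) / 2 := by
      simp [Mid]
    rw [h2]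
    rw [Finset.sum_Icc_succ_top (by omega : 1 ≤ m + 2)]
    have : (m : ℕ) + 2 - 1 = m + 1 := by omega
    rw [this]
    ring

lemma sum_id (m : ℕ) (X : ℕ → ℝ) :
    (∑ j ∈ Finset.Icc 1 (m + 1), X (j - 1) / 2 ^ j) + X (m + 2) / 2 ^ (m + 1)
      = X 0 + (∑ k ∈ Finset.Icc 1 m, (X k - X (k - 1)) / 2 ^ k)
        + (X (m + 1) - X m) / 2 ^ (m + 1) + (X (m + 2) - X (m + 1)) / 2 ^ (m + 1) := by
  induction m with
  | zero => simp; ring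
  | succ m ih =>
    have e1 : (m : ℕ) + 2 - 1 = m + 1 := by omega
    have e2 : (m : ℕ) + 1 - 1 = m := by omega
    have hs2 : (∑ j ∈ Finset.Icc 1 (m + 2), X (j - 1) / 2 ^ j)
        = (∑ j ∈ Finset.Icc 1 (m + 1), X (j - 1) / 2 ^ j) + X (m + 1) / 2 ^ (m + 2) := by
      rw [Finset.sum_Icc_succ_top (by omega : 1 ≤ m + 2), e1]
    have hs : (∑ k ∈ Finset.Icc 1 (m + 1), (X k - X (k - 1)) / 2 ^ k)
        = (∑ k ∈ Finset.Icc 1 m, (X k - X (k - 1)) / 2 ^ k)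
          + (X (m + 1) - X m) / 2 ^ (m + 1) := by
      rw [Finset.sum_Icc_succ_top (by omega : 1 ≤ m + 1), e2]
    rw [hs2, hs]
    linear_combination ih

theorem tmap_first_coord (n : ℕ) (hn : 1 ≤ n) (μ : ℝ) (X : ℕ → ℝ)
    (hX : BeadMono (n + 1) μ X) :
    (Tmap n X) 1 = μ + (∑ k ∈ Finset.Icc 1 (n - 1), (X k - X (k - 1)) / 2 ^ k)
      + (X n - X (n - 1)) / 2 ^ n + (X (n + 1) - X n) / 2 ^ n := by

  obtain ⟨m, rfl⟩ : ∃ m, n = m + 1 := ⟨n - 1, by omega⟩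
  have hmu : X 0 = μ := hX.1
  have e : (m : ℕ) + 1 - 1 = m := by omega
  rw [tmap_one m X, sum_id m X, hmu, e]
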